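/- For integers n and i with 2 ≤ i ≤ n - 5, the largest root of the quadratic x^2 - (n - i - 1)x - i(n - i) is strictly greater than n - i + 0.67. -/
import Mathlib


/-- For integers `2 ≤ i ≤ n - 5`, the largest root of
`x^2 - (n - i - 1) x - i (n - i)` is strictly greater than `n - i + 0.67`. -/
theorem stmt_3 (n i : ℤ) (hi : 2 ≤ i) (hin : i ≤ n - 5) (r : ℝ)
    (hr : IsGreatest {x : ℝ |
        x ^ 2 - ((n : ℝ) - (i : ℝ) - 1) * x - (i : ℝ) * ((n : ℝ) - (i : ℝ)) = 0} r) :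
    r > (n : ℝ) - (i : ℝ) + 0.67 := by
  have hi' : (2 : ℝ) ≤ (i : ℝ) := by exact_mod_cast hi
  have hm : (5 : ℝ) ≤ (n : ℝ) - (i : ℝ) := by
    have : (i : ℝ) ≤ (n : ℝ) - 5 := by exact_mod_cast hin
    linarith
  have hdisc : (0 : ℝ) ≤ ((n : ℝ) - (i : ℝ) - 1) ^ 2 + 4 * ((i : ℝ) * ((n : ℝ) - (i : ℝ))) := by
    nlinarith
  set s : ℝ := Real.sqrt (((n : ℝ) - (i : ℝ) - 1) ^ 2 + 4 * ((i : ℝ) * ((n : ℝ) - (i : ℝ))))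
    with hsdef
  have hs : s ^ 2 = ((n : ℝ) - (i : ℝ) - 1) ^ 2 + 4 * ((i : ℝ) * ((n : ℝ) - (i : ℝ))) :=
    Real.sq_sqrt hdisc
  have hsnn : 0 ≤ s := Real.sqrt_nonneg _
  have hmem : (((n : ℝ) - (i : ℝ) - 1) + s) / 2 ∈ {x : ℝ |
      x ^ 2 - ((n : ℝ) - (i : ℝ) - 1) * x - (i : ℝ) * ((n : ℝ) - (i : ℝ)) = 0} := by
    show ((((n : ℝ) - (i : ℝ) - 1) + s) / 2) ^ 2
        - ((n : ℝ) - (i : ℝ) - 1) * ((((n : ℝ) - (i : ℝ) - 1) + s) / 2)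
        - (i : ℝ) * ((n : ℝ) - (i : ℝ)) = 0
    nlinarith [hs]
  have hle : (((n : ℝ) - (i : ℝ) - 1) + s) / 2 ≤ r := hr.2 hmem
  have hneg : ((n : ℝ) - (i : ℝ) + 0.67) ^ 2
      - ((n : ℝ) - (i : ℝ) - 1) * ((n : ℝ) - (i : ℝ) + 0.67)
      - (i : ℝ) * ((n : ℝ) - (i : ℝ)) < 0 := by
    nlinarith [mul_nonneg (by linarith : (0:ℝ) ≤ (i : ℝ) - 2)
      (by linarith : (0:ℝ) ≤ (n : ℝ) - (i : ℝ) - 5)]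
  have h1 : (2 * ((n : ℝ) - (i : ℝ) + 0.67) - ((n : ℝ) - (i : ℝ) - 1)) ^ 2 < s ^ 2 := by
    nlinarith [hneg, hs]
  have h2 : 2 * ((n : ℝ) - (i : ℝ) + 0.67) - ((n : ℝ) - (i : ℝ) - 1) < s :=
    lt_of_pow_lt_pow_left₀ 2 hsnn h1
  linarith
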